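/- arXiv:2209.04139 — 5 statements merged into one kernel-verified Lean document; each statement's English description precedes it below -/
import Mathlib

section
/- For a matrix X ∈ Mat(2n,ℂ), e^{tX} is an 𝓘-contraction (i.e., 𝓘 − (e^{tX})* 𝓘 e^{tX} ≥ 0) for all t > 0 if and only if Re⟨v, 𝓘 X v⟩ ≤ 0 for all v ∈ ℂ^{2n}. -/
open Matrix NormedSpace
open scoped ComplexOrder

section auxStmt0
set_option linter.unusedSectionVars false
variable {m : Type*} [Fintype m] [DecidableEq m]

attribute [local instance] Matrix.linftyOpNormedAddCommGroup Matrix.linftyOpNormedRing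
  Matrix.linftyOpNormedAlgebra

private lemma auxDeriv (X : Matrix m m ℂ) (t : ℝ) :
    HasDerivAt (fun u : ℝ => exp ((u : ℂ) • X)) (exp ((t : ℂ) • X) * X) t := by
  have h : ∀ u : ℝ, exp ((u : ℂ) • X) = exp (u • X) := by
    intro u
    rw [Complex.coe_smul]
  simp only [h]
  exact hasDerivAt_exp_smul_const X t

private lemma auxConj (X : Matrix m m ℂ) (u : ℝ) :
    (exp ((u : ℂ) • X))ᴴ = exp ((u : ℂ) • Xᴴ) := by
  rw [← Matrix.exp_conjTranspose]
  congr 1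
  rw [conjTranspose_smul]
  norm_num

private lemma auxComm (X : Matrix m m ℂ) (u : ℝ) :
    exp ((u : ℂ) • X) * X = X * exp ((u : ℂ) • X) :=
  (((Commute.refl X).smul_left ((u : ℂ))).exp_left).eq

private lemma quadConj (B E : Matrix m m ℂ) (v : m → ℂ) :
    star (E *ᵥ v) ⬝ᵥ (B *ᵥ (E *ᵥ v)) = star v ⬝ᵥ ((Eᴴ * B * E) *ᵥ v) := by
  simp only [star_mulVec, ← dotProduct_mulVec, mulVec_mulVec, ← mul_assoc]

private lemma quadStar (B : Matrix m m ℂ) (v : m → ℂ) :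
    star (star v ⬝ᵥ (B *ᵥ v)) = star v ⬝ᵥ (Bᴴ *ᵥ v) := by
  rw [star_dotProduct, star_star, star_mulVec, ← dotProduct_mulVec]

private noncomputable def quadCLM (v : m → ℂ) : Matrix m m ℂ →L[ℝ] ℂ :=
  LinearMap.toContinuousLinearMap
    { toFun := fun A => star v ⬝ᵥ (A *ᵥ v)
      map_add' := by intro A B; simp [add_mulVec, dotProduct_add]
      map_smul' := by intro r A; simp [smul_mulVec, dotProduct_smul] }

private lemma quadCLM_apply (v : m → ℂ) (A : Matrix m m ℂ) :
    quadCLM v A = star v ⬝ᵥ (A *ᵥ v) := rfl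

private lemma auxScalarDeriv (X I' : Matrix m m ℂ) (v : m → ℂ) (t : ℝ) :
    HasDerivAt
      (fun u : ℝ =>
        (star v ⬝ᵥ (((exp ((u : ℂ) • X))ᴴ * I' * exp ((u : ℂ) • X)) *ᵥ v)).re)
      ((star (exp ((t : ℂ) • X) *ᵥ v) ⬝ᵥ
        ((Xᴴ * I' + I' * X) *ᵥ (exp ((t : ℂ) • X) *ᵥ v))).re) t := by
  have h1 := auxDeriv Xᴴ t
  have h2 := (auxDeriv X t).const_mul I'
  have h3 := h1.mul h2
  have h4 := (Complex.reCLM.hasFDerivAt.comp_hasDerivAt t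
    ((quadCLM v).hasFDerivAt.comp_hasDerivAt t h3))
  convert h4 using 2 with u
  · rfl
  · rfl
  · simp only [quadCLM_apply, auxConj, Function.comp_apply, mul_assoc]
    rfl
  · change _ = (star v ⬝ᵥ ((exp ((t : ℂ) • Xᴴ) * Xᴴ * (I' * exp ((t : ℂ) • X)) +
      exp ((t : ℂ) • Xᴴ) * (I' * (exp ((t : ℂ) • X) * X))) *ᵥ v)).re
    rw [quadConj]
    congr 1
    rw [auxConj, auxComm X t]
    noncomm_ring

private lemma auxSum (X I' : Matrix m m ℂ) (hIH : I'ᴴ = I') (w : m → ℂ) :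
    (star w ⬝ᵥ ((Xᴴ * I' + I' * X) *ᵥ w)).re
      = 2 * (star w ⬝ᵥ (I' *ᵥ (X *ᵥ w))).re := by
  have h := quadStar (I' * X) w
  rw [conjTranspose_mul, hIH] at h
  rw [add_mulVec, dotProduct_add, Complex.add_re, ← h, Complex.star_def, Complex.conj_re,
    ← mulVec_mulVec]
  ring

end auxStmt0

/-- For `X ∈ Mat(2n,ℂ)`, `e^{tX}` is an `𝓘`-contraction for all `t > 0`
iff `Re⟨v, 𝓘 X v⟩ ≤ 0` for all `v ∈ ℂ^{2n}`. -/
theorem stmt0 (n : ℕ) (X : Matrix (Fin n ⊕ Fin n) (Fin n ⊕ Fin n) ℂ)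
    (I' : Matrix (Fin n ⊕ Fin n) (Fin n ⊕ Fin n) ℂ)
    (hI : I' = Matrix.fromBlocks (-1) 0 0 1) :
    (∀ t : ℝ, 0 < t →
        (I' - (NormedSpace.exp ((t : ℂ) • X))ᴴ * I' * NormedSpace.exp ((t : ℂ) • X)).PosSemidef) ↔
      (∀ v : Fin n ⊕ Fin n → ℂ, (star v ⬝ᵥ (I' *ᵥ (X *ᵥ v))).re ≤ 0) := by
  have hIH : I'ᴴ = I' := by
    subst hI
    simp [Matrix.fromBlocks_conjTranspose]
  have hE0 : exp (((0 : ℝ) : ℂ) • X) = 1 := by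
    norm_num [exp_zero]
  constructor
  · -- contraction ⟹ dissipative
    intro h v
    set r : ℝ → ℝ := fun u =>
      (star v ⬝ᵥ (((exp ((u : ℂ) • X))ᴴ * I' * exp ((u : ℂ) • X)) *ᵥ v)).re with hr
    have hd : HasDerivAt r ((star v ⬝ᵥ ((Xᴴ * I' + I' * X) *ᵥ v)).re) 0 := by
      have := auxScalarDeriv X I' v 0
      rw [hE0] at this
      simpa [hr] using this
    -- r t ≤ r 0 for t > 0
    have hle : ∀ t : ℝ, 0 < t → r t ≤ r 0 := by
      intro t ht
      have hp := (h t ht).dotProduct_mulVec_nonneg v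
      have hre : 0 ≤ (star v ⬝ᵥ ((I' - (exp ((t : ℂ) • X))ᴴ * I' * exp ((t : ℂ) • X)) *ᵥ v)).re := by
        exact (Complex.le_def.mp hp).1
      rw [sub_mulVec, dotProduct_sub, Complex.sub_re] at hre
      have hr0 : r 0 = (star v ⬝ᵥ (I' *ᵥ v)).re := by
        simp [hr, hE0]
      rw [hr0]
      have hrt : r t = (star v ⬝ᵥ (((exp ((t : ℂ) • X))ᴴ * I' * exp ((t : ℂ) • X)) *ᵥ v)).re := rfl
      rw [hrt]
      linarith
    -- derivative at 0 is ≤ 0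
    have hslope : Filter.Tendsto (slope r 0) (nhdsWithin 0 (Set.Ioi 0)) (nhds ((star v ⬝ᵥ ((Xᴴ * I' + I' * X) *ᵥ v)).re)) :=
      (hasDerivAt_iff_tendsto_slope.mp hd).mono_left
        (nhdsWithin_mono _ (fun x hx => ne_of_gt hx))
    have hd0 : (star v ⬝ᵥ ((Xᴴ * I' + I' * X) *ᵥ v)).re ≤ 0 := by
      refine le_of_tendsto hslope ?_
      filter_upwards [self_mem_nhdsWithin] with t ht
      have ht' : (0:ℝ) < t := ht
      have h1 := hle t ht'
      rw [slope_def_field, sub_zero]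
      apply div_nonpos_of_nonpos_of_nonneg <;> linarith
    have hsum := auxSum X I' hIH v
    linarith [hd0, hsum]
  · -- dissipative ⟹ contraction
    intro h t ht
    have hherm : (I' - (exp ((t : ℂ) • X))ᴴ * I' * exp ((t : ℂ) • X)).IsHermitian := by
      unfold Matrix.IsHermitian
      rw [conjTranspose_sub, conjTranspose_mul, conjTranspose_mul, conjTranspose_conjTranspose,
        hIH, mul_assoc]
    refine .of_dotProduct_mulVec_nonneg hherm fun x => ?_
    set r : ℝ → ℝ := fun u =>
      (star x ⬝ᵥ (((exp ((u : ℂ) • X))ᴴ * I' * exp ((u : ℂ) • X)) *ᵥ x)).re with hr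
    have hdiff : ∀ u : ℝ, HasDerivAt r
        ((star (exp ((u : ℂ) • X) *ᵥ x) ⬝ᵥ
          ((Xᴴ * I' + I' * X) *ᵥ (exp ((u : ℂ) • X) *ᵥ x))).re) u :=
      fun u => auxScalarDeriv X I' x u
    have hderivle : ∀ u : ℝ, deriv r u ≤ 0 := by
      intro u
      rw [(hdiff u).deriv, auxSum X I' hIH]
      have := h (exp ((u : ℂ) • X) *ᵥ x)
      linarith
    have hanti : Antitone r :=
      antitone_of_deriv_nonpos (fun u => (hdiff u).differentiableAt) hderivle
    have hle : r t ≤ r 0 := hanti ht.le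
    have hr0 : r 0 = (star x ⬝ᵥ (I' *ᵥ x)).re := by simp [hr, hE0]
    -- the quadratic value is a nonneg real
    set z : ℂ := star x ⬝ᵥ ((I' - (exp ((t : ℂ) • X))ᴴ * I' * exp ((t : ℂ) • X)) *ᵥ x) with hz
    have hzstar : star z = z := by
      rw [hz, quadStar, hherm]
    rw [Complex.le_def]
    constructor
    · rw [hz, sub_mulVec, dotProduct_sub, Complex.sub_re, Complex.zero_re]
      rw [hr0] at hle
      have hrt : r t = (star x ⬝ᵥ (((exp ((t : ℂ) • X))ᴴ * I' * exp ((t : ℂ) • X)) *ᵥ x)).re := rfl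
      linarith [hle]
    · have h2 : -z.im = z.im := by
        rw [← Complex.conj_im, ← Complex.star_def, hzstar]
      simp only [Complex.zero_im]
      linarith
end

section
/- For X ∈ 𝔰𝔭(2n,ℂ) with 𝓘 X ≤ 0 (i.e., X is 𝓘-self-adjoint dissipative), e^{X} lies in ΓSp_c(2n) := Sp(2n,ℂ) ∩ ΓU(n,n). -/
open Matrix NormedSpace
open scoped ComplexOrder

attribute [local instance] Matrix.linftyOpNormedRing Matrix.linftyOpNormedAlgebra

private lemma conj_dot {m : Type*} [Fintype m] (B M : Matrix m m ℂ) (y : m → ℂ) :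
    star y ⬝ᵥ ((Bᴴ * M * B) *ᵥ y) = star (B *ᵥ y) ⬝ᵥ (M *ᵥ (B *ᵥ y)) := by
  simp [Matrix.star_mulVec, Matrix.dotProduct_mulVec, Matrix.vecMul_vecMul, Matrix.mul_assoc]

set_option maxHeartbeats 1000000 in
/-- If `X ∈ 𝔰𝔭(2n,ℂ)` is `𝓘`-self-adjoint dissipative (`𝓘X ≤ 0`), then
`e^X ∈ ΓSp_c(2n) = Sp(2n,ℂ) ∩ ΓU(n,n)`. -/
theorem stmt2 (n : ℕ) (I' J X : Matrix (Fin n ⊕ Fin n) (Fin n ⊕ Fin n) ℂ)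
    (hI : I' = Matrix.fromBlocks (-1) 0 0 1)
    (hJ : J = Matrix.fromBlocks 0 1 (-1) 0)
    (hsp : J * X + Xᵀ * J = 0)
    (hdiss : (-(I' * X)).PosSemidef) :
    (exp X)ᵀ * J * exp X = J ∧ (I' - (exp X)ᴴ * I' * exp X).PosSemidef := by
  have hJJ : J * J = -1 := by
    subst hJ
    rw [Matrix.fromBlocks_multiply]
    ext (i | i) (j | j) <;>
      simp [Matrix.one_apply]
  have hJinv : J⁻¹ = -J := by
    apply Matrix.inv_eq_right_inv
    rw [mul_neg, hJJ, neg_neg]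
  have hJunit : IsUnit J := by
    refine ⟨⟨J, -J, ?_, ?_⟩, rfl⟩
    · rw [mul_neg, hJJ, neg_neg]
    · rw [neg_mul, hJJ, neg_neg]
  have h1 : Xᵀ * J = -(J * X) := by
    have h := hsp
    rw [add_comm] at h
    exact eq_neg_of_add_eq_zero_left h
  have hXT : Xᵀ = J * (-X) * J⁻¹ := by
    have h2 : Xᵀ * (J * -J) = Xᵀ := by rw [mul_neg, hJJ, neg_neg, mul_one]
    calc Xᵀ = Xᵀ * (J * -J) := h2.symm
      _ = Xᵀ * J * -J := by rw [mul_assoc]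
      _ = -(J * X) * -J := by rw [h1]
      _ = J * (-X) * J⁻¹ := by
          rw [hJinv]
          simp [neg_mul, mul_neg, neg_neg]
  have part1 : (exp X)ᵀ * J * exp X = J := by
    rw [← Matrix.exp_transpose X, hXT, Matrix.exp_conj J (-X) hJunit, hJinv]
    have h3 : exp (-X) * exp X = 1 := by
      rw [← Matrix.exp_add_of_commute _ _ ((Commute.refl X).neg_left), neg_add_cancel, exp_zero]
    calc J * exp (-X) * -J * J * exp X
        = J * exp (-X) * (-J * J) * exp X := by rw [mul_assoc (J * exp (-X))]
      _ = J * (exp (-X) * exp X) := by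
          rw [neg_mul, hJJ, neg_neg, mul_one, mul_assoc]
      _ = J := by rw [h3, mul_one]
  refine ⟨part1, ?_⟩
  -- Part 2
  have hI'h : I'ᴴ = I' := by
    subst hI
    simp [Matrix.fromBlocks_conjTranspose]
  have h4 : (I' * X)ᴴ = I' * X := by
    have h := hdiss.1
    rwa [Matrix.IsHermitian, Matrix.conjTranspose_neg, neg_inj] at h
  have hXI : Xᴴ * I' = I' * X := by
    conv_rhs => rw [← h4]
    rw [Matrix.conjTranspose_mul, hI'h]
  set A : ℝ → Matrix (Fin n ⊕ Fin n) (Fin n ⊕ Fin n) ℂ := fun t => exp (t • X) with hAdef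
  have hA : ∀ t : ℝ, HasDerivAt A (A t * X) t := by
    intro t
    have := hasDerivAt_exp_smul_const (𝕂 := ℝ)
      (𝔸 := Matrix (Fin n ⊕ Fin n) (Fin n ⊕ Fin n) ℂ) X t
    exact this
  have hAX : ∀ t : ℝ, A t * X = X * A t := fun t =>
    (((Commute.refl X).smul_left t).exp_left)
  have hc1 : ∀ t : ℝ, Xᴴ * (A t)ᴴ = (A t)ᴴ * Xᴴ := by
    intro t
    have := congrArg Matrix.conjTranspose (hAX t)
    simpa [Matrix.conjTranspose_mul] using this
  set g : ℝ → Matrix (Fin n ⊕ Fin n) (Fin n ⊕ Fin n) ℂ := fun t => (A t)ᴴ * I' * A t with hgdef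
  set D : ℝ → Matrix (Fin n ⊕ Fin n) (Fin n ⊕ Fin n) ℂ :=
    fun t => (A t)ᴴ * ((2 : ℂ) • (I' * X)) * A t with hDdef
  have hg : ∀ t, HasDerivAt g (D t) t := by
    intro t
    have : @ContinuousStar (Matrix (Fin n ⊕ Fin n) (Fin n ⊕ Fin n) ℂ) (PseudoMetricSpace.toUniformSpace.toTopologicalSpace) _ := ⟨continuous_id.matrix_conjTranspose⟩
    have h := ((hA t).star.mul_const I').mul (hA t)
    convert h using 1
    case e'_4 => rfl
    case e'_5 => rfl
    case e'_6 => rfl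
    case e'_8 => rfl
    rw [hDdef]
    simp only [Matrix.star_eq_conjTranspose, Matrix.conjTranspose_mul]
    rw [two_smul]
    rw [Matrix.mul_add, Matrix.add_mul, ← hXI]
    rw [hAX t]
    rw [hc1 t]
    noncomm_ring
    rw [two_smul]
    congr 1
    rw [← Matrix.mul_assoc Xᴴ, hXI, Matrix.mul_assoc]
  have hg0 : g 0 = I' := by
    rw [hgdef]
    simp only [hAdef]
    rw [zero_smul, exp_zero]
    simp
  have hg1 : g 1 = (exp X)ᴴ * I' * exp X := by
    rw [hgdef]
    simp only [hAdef]
    rw [one_smul]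
  have hherm : (I' - (exp X)ᴴ * I' * exp X).IsHermitian := by
    unfold Matrix.IsHermitian
    simp [Matrix.conjTranspose_sub, Matrix.conjTranspose_mul, hI'h, Matrix.mul_assoc]
  refine Matrix.posSemidef_iff_dotProduct_mulVec.mpr ⟨hherm, fun y => ?_⟩
  -- the linear functional
  let L : Matrix (Fin n ⊕ Fin n) (Fin n ⊕ Fin n) ℂ →ₗ[ℂ] ℂ :=
    { toFun := fun M => star y ⬝ᵥ (M *ᵥ y)
      map_add' := fun M N => by simp [Matrix.add_mulVec]
      map_smul' := fun c M => by simp [Matrix.smul_mulVec] }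
  let Lc : Matrix (Fin n ⊕ Fin n) (Fin n ⊕ Fin n) ℂ →L[ℂ] ℂ := LinearMap.toContinuousLinearMap L
  set ψ : ℝ → ℝ := fun t => (Lc (g t)).re with hψdef
  have hψ : ∀ t, HasDerivAt ψ ((Lc (D t)).re) t := by
    intro t
    have hc : HasDerivAt (fun t => Lc (g t)) (Lc (D t)) t :=
      (Lc.restrictScalars ℝ).hasFDerivAt.comp_hasDerivAt t (hg t)
    exact Complex.reCLM.hasFDerivAt.comp_hasDerivAt t hc
  have hψ' : ∀ t, (Lc (D t)).re ≤ 0 := by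
    intro t
    have hq := hdiss.dotProduct_mulVec_nonneg (A t *ᵥ y)
    have hval : Lc (D t) = (2 : ℂ) * (star (A t *ᵥ y) ⬝ᵥ ((I' * X) *ᵥ (A t *ᵥ y))) := by
      show star y ⬝ᵥ (D t *ᵥ y) = _
      rw [hDdef, conj_dot]
      simp [Matrix.smul_mulVec]
    rw [Complex.nonneg_iff] at hq
    have him : (star (A t *ᵥ y) ⬝ᵥ ((I' * X) *ᵥ (A t *ᵥ y))).re ≤ 0 := by
      have : star (A t *ᵥ y) ⬝ᵥ ((-(I' * X)) *ᵥ (A t *ᵥ y))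
          = -(star (A t *ᵥ y) ⬝ᵥ ((I' * X) *ᵥ (A t *ᵥ y))) := by
        simp [Matrix.neg_mulVec]
      rw [this] at hq
      have := hq.1
      simp only [Complex.neg_re] at this
      linarith
    rw [hval]
    simp only [Matrix.mulVec_mulVec] at him ⊢
    rw [Complex.mul_re]
    norm_num
    linarith [him]
  have hmono : Antitone ψ :=
    antitone_of_deriv_nonpos (fun t => (hψ t).differentiableAt)
      (fun t => by rw [(hψ t).deriv]; exact hψ' t)
  have h01 : ψ 1 ≤ ψ 0 := hmono zero_le_one
  -- now conclude
  set K : Matrix (Fin n ⊕ Fin n) (Fin n ⊕ Fin n) ℂ := I' - (exp X)ᴴ * I' * exp X with hK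
  have hstar : star (star y ⬝ᵥ (K *ᵥ y)) = star y ⬝ᵥ (K *ᵥ y) := by
    rw [← Matrix.star_dotProduct_star (K *ᵥ y) (star y)]
    rw [star_star, Matrix.star_mulVec, hherm.eq]
    rw [← Matrix.dotProduct_mulVec]
  rw [Complex.nonneg_iff]
  constructor
  · have hsplit : star y ⬝ᵥ (K *ᵥ y) = Lc I' - Lc (g 1) := by
      rw [hg1, hK]
      show star y ⬝ᵥ ((I' - (exp X)ᴴ * I' * exp X) *ᵥ y) = _
      rw [← hg1]
      rw [← map_sub]
      show _ = star y ⬝ᵥ ((I' - g 1) *ᵥ y)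
      rfl
    rw [hsplit]
    have : (Lc I').re = ψ 0 := by simp only [hψdef, hg0]
    rw [Complex.sub_re, this]
    have : (Lc (g 1)).re = ψ 1 := rfl
    rw [this]
    linarith
  · have := congrArg Complex.im hstar
    simp only [Complex.star_def, Complex.conj_im] at this
    linarith
end

section
/- Let P₁, P₂ be 2n-dimensional subspaces of ℂ^{2n} ⊕ ℂ^{2n} whose Potapov transforms are graphs of matrices Π(P₁) = [[α,β],[γ,δ]] and Π(P₂) = [[φ,ψ],[θ,ϰ]] with ‖δ‖, ‖φ‖ < 1. Then the composed subspace P₁P₂ has Potapov transform Π(P₁P₂) = [[α + β(1−φδ)^{−1}φγ, β(1−φδ)^{−1}ψ],[θ(1−δφ)^{−1}γ, ϰ + θδ(1−φδ)^{−1}ψ]]. -/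
open Matrix
open scoped Matrix.Norms.L2Operator

/-- The Potapov swap map `Π`, `(v₋⊕v₊)⊕(w₋⊕w₊) ↦ (v₋⊕w₊)⊕(v₊⊕w₋)`. -/
def potapovSwap (n : ℕ) :
    ((Fin n ⊕ Fin n → ℂ) × (Fin n ⊕ Fin n → ℂ)) →
      ((Fin n ⊕ Fin n → ℂ) × (Fin n ⊕ Fin n → ℂ)) :=
  fun p =>
    (Sum.elim (fun j => p.1 (Sum.inl j)) (fun j => p.2 (Sum.inr j)),
     Sum.elim (fun j => p.1 (Sum.inr j)) (fun j => p.2 (Sum.inl j)))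

/-- The graph of a matrix `T`, as a set of pairs. -/
def mGraph (n : ℕ) (T : Matrix (Fin n ⊕ Fin n) (Fin n ⊕ Fin n) ℂ) :
    Set ((Fin n ⊕ Fin n → ℂ) × (Fin n ⊕ Fin n → ℂ)) :=
  {p | p.2 = T *ᵥ p.1}

/-- Explicit inverse of the Potapov swap. -/
def potapovSwapInv (n : ℕ) :
    ((Fin n ⊕ Fin n → ℂ) × (Fin n ⊕ Fin n → ℂ)) →
      ((Fin n ⊕ Fin n → ℂ) × (Fin n ⊕ Fin n → ℂ)) :=
  fun q =>
    (Sum.elim (fun j => q.1 (Sum.inl j)) (fun j => q.2 (Sum.inl j)),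
     Sum.elim (fun j => q.2 (Sum.inr j)) (fun j => q.1 (Sum.inr j)))

lemma potapovSwap_leftInv (n : ℕ) :
    Function.LeftInverse (potapovSwapInv n) (potapovSwap n) := by
  intro p; ext x
  · cases x <;> rfl
  · cases x <;> rfl

lemma potapovSwap_rightInv (n : ℕ) :
    Function.RightInverse (potapovSwapInv n) (potapovSwap n) := by
  intro p; ext x
  · cases x <;> rfl
  · cases x <;> rfl

lemma elim_eq_iff {n : ℕ} (f g f' g' : Fin n → ℂ) :
    Sum.elim f g = Sum.elim f' g' ↔ f = f' ∧ g = g' := by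
  constructor
  · intro h
    exact ⟨funext fun i => congrFun h (Sum.inl i), funext fun i => congrFun h (Sum.inr i)⟩
  · rintro ⟨rfl, rfl⟩; rfl

lemma graph_mem_iff (n : ℕ) (A B C D : Matrix (Fin n) (Fin n) ℂ)
    (x y : Fin n ⊕ Fin n → ℂ) :
    potapovSwap n (x, y) ∈ mGraph n (Matrix.fromBlocks A B C D) ↔
      ((fun j => x (Sum.inr j)) =
          A *ᵥ (fun j => x (Sum.inl j)) + B *ᵥ (fun j => y (Sum.inr j)) ∧
       (fun j => y (Sum.inl j)) =
          C *ᵥ (fun j => x (Sum.inl j)) + D *ᵥ (fun j => y (Sum.inr j))) := by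
  show Sum.elim _ _ = Matrix.fromBlocks A B C D *ᵥ Sum.elim _ _ ↔ _
  rw [Matrix.fromBlocks_mulVec]
  rw [show (Sum.elim (fun j => x (Sum.inl j)) (fun j => y (Sum.inr j)) ∘ Sum.inl)
      = fun j => x (Sum.inl j) from rfl,
    show (Sum.elim (fun j => x (Sum.inl j)) (fun j => y (Sum.inr j)) ∘ Sum.inr)
      = fun j => y (Sum.inr j) from rfl]
  exact elim_eq_iff _ _ _ _

lemma mem_iff_of_image_eq (n : ℕ)
    (P : Submodule ℂ ((Fin n ⊕ Fin n → ℂ) × (Fin n ⊕ Fin n → ℂ)))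
    (M : Matrix (Fin n ⊕ Fin n) (Fin n ⊕ Fin n) ℂ)
    (h : potapovSwap n '' (P : Set _) = mGraph n M) (x y : Fin n ⊕ Fin n → ℂ) :
    (x, y) ∈ P ↔ potapovSwap n (x, y) ∈ mGraph n M := by
  constructor
  · intro hm; rw [← h]; exact ⟨(x, y), hm, rfl⟩
  · intro hm; rw [← h] at hm
    obtain ⟨q, hq, hq'⟩ := hm
    have := (potapovSwap_leftInv n).injective hq'
    rwa [this] at hq

/-- Composition formula for Potapov transforms: if `Π(P₁) = [[α,β],[γ,δ]]`,
`Π(P₂) = [[φ,ψ],[θ,ϰ]]` with `‖δ‖, ‖φ‖ < 1`, then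
`Π(P₁P₂) = [[α + β(1−φδ)⁻¹φγ, β(1−φδ)⁻¹ψ],[θ(1−δφ)⁻¹γ, ϰ + θδ(1−φδ)⁻¹ψ]]`. -/
theorem stmt11 (n : ℕ)
    (P₁ P₂ : Submodule ℂ ((Fin n ⊕ Fin n → ℂ) × (Fin n ⊕ Fin n → ℂ)))
    (h₁ : Module.finrank ℂ P₁ = 2 * n) (h₂ : Module.finrank ℂ P₂ = 2 * n)
    (α β γ δ φ ψ θ ϰ : Matrix (Fin n) (Fin n) ℂ)
    (hP₁ : potapovSwap n '' (P₁ : Set _) = mGraph n (Matrix.fromBlocks α β γ δ))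
    (hP₂ : potapovSwap n '' (P₂ : Set _) = mGraph n (Matrix.fromBlocks φ ψ θ ϰ))
    (hδ : ‖δ‖ < 1) (hφ : ‖φ‖ < 1) :
    potapovSwap n ''
        {p : (Fin n ⊕ Fin n → ℂ) × (Fin n ⊕ Fin n → ℂ) |
          ∃ w : Fin n ⊕ Fin n → ℂ, (p.1, w) ∈ P₁ ∧ (w, p.2) ∈ P₂} =
      mGraph n (Matrix.fromBlocks
        (α + β * (1 - φ * δ)⁻¹ * φ * γ) (β * (1 - φ * δ)⁻¹ * ψ)
        (θ * (1 - δ * φ)⁻¹ * γ) (ϰ + θ * δ * (1 - φ * δ)⁻¹ * ψ)) := by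
  -- invertibility of 1 - φδ and 1 - δφ
  have hnorm : ‖φ‖ * ‖δ‖ < 1 := by nlinarith [norm_nonneg φ, norm_nonneg δ]
  have hE : IsUnit (1 - φ * δ) :=
    (Units.oneSub (φ * δ) (lt_of_le_of_lt (norm_mul_le _ _) hnorm)).isUnit
  have hF : IsUnit (1 - δ * φ) := by
    have : ‖δ‖ * ‖φ‖ < 1 := by nlinarith [norm_nonneg φ, norm_nonneg δ]
    exact (Units.oneSub (δ * φ) (lt_of_le_of_lt (norm_mul_le _ _) this)).isUnit
  have hEE : (1 - φ * δ) * (1 - φ * δ)⁻¹ = 1 :=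
    Matrix.mul_nonsing_inv _ ((Matrix.isUnit_iff_isUnit_det _).mp hE)
  have hEE' : (1 - φ * δ)⁻¹ * (1 - φ * δ) = 1 :=
    Matrix.nonsing_inv_mul _ ((Matrix.isUnit_iff_isUnit_det _).mp hE)
  -- key identity : (1-δφ)⁻¹ = 1 + δ (1-φδ)⁻¹ φ
  have id2 : (1 - δ * φ)⁻¹ = 1 + δ * (1 - φ * δ)⁻¹ * φ := by
    apply Matrix.inv_eq_right_inv
    have hFd : (1 - δ * φ) * δ = δ * (1 - φ * δ) := by noncomm_ring
    have expand : (1 - δ * φ) * (1 + δ * (1 - φ * δ)⁻¹ * φ)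
        = (1 - δ * φ) + (1 - δ * φ) * δ * ((1 - φ * δ)⁻¹ * φ) := by noncomm_ring
    have collapse : (1 - δ * φ) * δ * ((1 - φ * δ)⁻¹ * φ) = δ * φ := by
      rw [hFd, mul_assoc, ← mul_assoc (1 - φ * δ) _ φ, hEE, one_mul]
    rw [expand, collapse]; noncomm_ring
  -- membership criteria
  have mem₁ := fun x w => (mem_iff_of_image_eq n P₁ _ hP₁ x w).trans
    (graph_mem_iff n α β γ δ x w)
  have mem₂ := fun w y => (mem_iff_of_image_eq n P₂ _ hP₂ w y).trans
    (graph_mem_iff n φ ψ θ ϰ w y)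
  -- the pointwise characterization of the product space
  have key : ∀ x y : Fin n ⊕ Fin n → ℂ,
      (∃ w, (x, w) ∈ P₁ ∧ (w, y) ∈ P₂) ↔
        ((fun j => x (Sum.inr j)) =
            (α + β * (1 - φ * δ)⁻¹ * φ * γ) *ᵥ (fun j => x (Sum.inl j))
              + (β * (1 - φ * δ)⁻¹ * ψ) *ᵥ (fun j => y (Sum.inr j)) ∧
         (fun j => y (Sum.inl j)) =
            (θ * (1 - δ * φ)⁻¹ * γ) *ᵥ (fun j => x (Sum.inl j))
              + (ϰ + θ * δ * (1 - φ * δ)⁻¹ * ψ) *ᵥ (fun j => y (Sum.inr j))) := by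
    intro x y
    simp only [mem₁, mem₂]
    set a := fun j => x (Sum.inl j) with ha
    set b := fun j => x (Sum.inr j) with hb
    set c := fun j => y (Sum.inl j) with hc
    set d := fun j => y (Sum.inr j) with hd
    constructor
    · rintro ⟨w, ⟨e1, e2⟩, ⟨e3, e4⟩⟩
      set wm := fun j => w (Sum.inl j) with hwmdef
      set wp := fun j => w (Sum.inr j) with hwpdef
      -- e1 : b = α *ᵥ a + β *ᵥ wp ; e2 : wm = γ *ᵥ a + δ *ᵥ wp
      -- e3 : wp = φ *ᵥ wm + ψ *ᵥ d ; e4 : c = θ *ᵥ wm + ϰ *ᵥ d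
      have e2' : φ *ᵥ wm = (φ * γ) *ᵥ a + (φ * δ) *ᵥ wp := by
        rw [e2]
        simp only [Matrix.mulVec_add, Matrix.mulVec_mulVec]
      have hEw : (1 - φ * δ) *ᵥ wp = (φ * γ) *ᵥ a + ψ *ᵥ d := by
        rw [Matrix.sub_mulVec, Matrix.one_mulVec]
        linear_combination e3 + e2'
      have hwsolve : wp = (1 - φ * δ)⁻¹ *ᵥ ((φ * γ) *ᵥ a + ψ *ᵥ d) := by
        rw [← hEw, Matrix.mulVec_mulVec, hEE', Matrix.one_mulVec]
      constructor
      · rw [e1, hwsolve]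
        simp only [Matrix.mulVec_add, Matrix.add_mulVec, Matrix.mulVec_mulVec,
          Matrix.one_mulVec, mul_add, add_mul, mul_one, one_mul, mul_assoc]
        abel
      · rw [e4, e2, hwsolve, id2]
        simp only [Matrix.mulVec_add, Matrix.add_mulVec, Matrix.mulVec_mulVec,
          Matrix.one_mulVec, mul_add, add_mul, mul_one, one_mul, mul_assoc]
        abel
    · rintro ⟨e1, e2⟩
      set wp := (1 - φ * δ)⁻¹ *ᵥ ((φ * γ) *ᵥ a + ψ *ᵥ d) with hwp
      set wm := γ *ᵥ a + δ *ᵥ wp with hwm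
      have hEwp : (1 - φ * δ) *ᵥ wp = (φ * γ) *ᵥ a + ψ *ᵥ d := by
        rw [hwp, Matrix.mulVec_mulVec, hEE, Matrix.one_mulVec]
      have hEwp' : wp - (φ * δ) *ᵥ wp = (φ * γ) *ᵥ a + ψ *ᵥ d := by
        rw [← hEwp, Matrix.sub_mulVec, Matrix.one_mulVec]
      refine ⟨Sum.elim wm wp, ⟨?_, ?_⟩, ⟨?_, ?_⟩⟩
      · show b = α *ᵥ a + β *ᵥ wp
        rw [e1, hwp]
        simp only [Matrix.mulVec_add, Matrix.add_mulVec, Matrix.mulVec_mulVec,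
          Matrix.one_mulVec, mul_add, add_mul, mul_one, one_mul, mul_assoc]
        abel
      · show wm = γ *ᵥ a + δ *ᵥ wp
        exact hwm
      · show wp = φ *ᵥ wm + ψ *ᵥ d
        rw [hwm]
        simp only [Matrix.mulVec_add, Matrix.mulVec_mulVec]
        linear_combination hEwp'
      · show c = θ *ᵥ wm + ϰ *ᵥ d
        rw [e2, hwm, hwp, id2]
        simp only [Matrix.mulVec_add, Matrix.add_mulVec, Matrix.mulVec_mulVec,
          Matrix.one_mulVec, mul_add, add_mul, mul_one, one_mul, mul_assoc]
        abel
  -- conclude the set equality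
  ext q
  constructor
  · rintro ⟨p, hp, rfl⟩
    obtain ⟨w, hw1, hw2⟩ := hp
    have := (key p.1 p.2).mp ⟨w, hw1, hw2⟩
    exact (graph_mem_iff n _ _ _ _ p.1 p.2).mpr this
  · intro hq
    refine ⟨potapovSwapInv n q, ?_, potapovSwap_rightInv n q⟩
    have hq' : potapovSwap n (potapovSwapInv n q) ∈ mGraph n (Matrix.fromBlocks
        (α + β * (1 - φ * δ)⁻¹ * φ * γ) (β * (1 - φ * δ)⁻¹ * ψ)
        (θ * (1 - δ * φ)⁻¹ * γ) (ϰ + θ * δ * (1 - φ * δ)⁻¹ * ψ)) := by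
      rw [potapovSwap_rightInv n q]; exact hq
    have := (graph_mem_iff n _ _ _ _ (potapovSwapInv n q).1 (potapovSwapInv n q).2).mp hq'
    exact (key (potapovSwapInv n q).1 (potapovSwapInv n q).2).mpr this
end

section
/- Π(U(n,n)) consists of unitary 2n×2n matrices [[α,β],[γ,δ]] with det β ≠ 0; moreover, for a unitary block matrix [[α,β],[γ,δ]], the conditions det β ≠ 0, det γ ≠ 0, ‖α‖ < 1, and ‖δ‖ < 1 are all equivalent. -/
open Matrix
open scoped Matrix.Norms.L2Operator

private lemma blocks_eq13 {n : ℕ} {A B C D A' B' C' D' : Matrix (Fin n) (Fin n) ℂ}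
    (h : fromBlocks A B C D = fromBlocks A' B' C' D') :
    A = A' ∧ B = B' ∧ C = C' ∧ D = D' := by
  refine ⟨?_, ?_, ?_, ?_⟩
  · simpa using congrArg Matrix.toBlocks₁₁ h
  · simpa using congrArg Matrix.toBlocks₁₂ h
  · simpa using congrArg Matrix.toBlocks₂₁ h
  · simpa using congrArg Matrix.toBlocks₂₂ h

private lemma blocks_congr13 {n : ℕ} {A B C D A' B' C' D' : Matrix (Fin n) (Fin n) ℂ}
    (h1 : A = A') (h2 : B = B') (h3 : C = C') (h4 : D = D') :
    fromBlocks A B C D = fromBlocks A' B' C' D' := by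
  rw [h1, h2, h3, h4]

private lemma aux_vec13 (n : ℕ) (X Y : Matrix (Fin n) (Fin n) ℂ) (h : Xᴴ * X + Yᴴ * Y = 1)
    (v : EuclideanSpace ℂ (Fin n)) :
    ‖toEuclideanCLM (𝕜 := ℂ) X v‖ ^ 2 + ‖toEuclideanCLM (𝕜 := ℂ) Y v‖ ^ 2 = ‖v‖ ^ 2 := by
  set T := toEuclideanCLM (𝕜 := ℂ) X
  set S := toEuclideanCLM (𝕜 := ℂ) Y
  have h' : star T * T + star S * S = 1 := by
    have := congrArg (toEuclideanCLM (𝕜 := ℂ)) h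
    simpa [_root_.map_add, _root_.map_mul, _root_.map_one, ← Matrix.star_eq_conjTranspose,
      map_star] using this
  have hv := congrArg (fun (L : EuclideanSpace ℂ (Fin n) →L[ℂ] EuclideanSpace ℂ (Fin n)) =>
      inner ℂ (L v) v : _ → ℂ) h'
  simp only [ContinuousLinearMap.add_apply, ContinuousLinearMap.mul_apply,
    ContinuousLinearMap.one_apply, inner_add_left,
    ContinuousLinearMap.star_eq_adjoint, ContinuousLinearMap.adjoint_inner_left] at hv
  rw [inner_self_eq_norm_sq_to_K (𝕜 := ℂ), inner_self_eq_norm_sq_to_K (𝕜 := ℂ),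
    inner_self_eq_norm_sq_to_K (𝕜 := ℂ)] at hv
  exact_mod_cast hv

private lemma aux_key13 (n : ℕ) (X Y : Matrix (Fin n) (Fin n) ℂ) (h : Xᴴ * X + Yᴴ * Y = 1) :
    ‖X‖ < 1 ↔ Y.det ≠ 0 := by
  set T := toEuclideanCLM (𝕜 := ℂ) X with hT
  set S := toEuclideanCLM (𝕜 := ℂ) Y with hS
  have hnorm : ‖X‖ = ‖T‖ := rfl
  constructor
  · intro hlt hdet
    obtain ⟨v, hv0, hvY⟩ := (Matrix.exists_mulVec_eq_zero_iff (M := Y)).2 hdet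
    set u : EuclideanSpace ℂ (Fin n) := (WithLp.equiv 2 _).symm v with hu
    have hu0 : u ≠ 0 := by simpa [hu] using hv0
    have hSu : S u = 0 := by
      rw [hS, hu, WithLp.equiv_symm_apply, toEuclideanCLM_toLp, hvY]
      simp
    have hid := aux_vec13 n X Y h u
    rw [hSu] at hid
    simp only [norm_zero] at hid
    have hTu : ‖T u‖ = ‖u‖ := by nlinarith [norm_nonneg (T u), norm_nonneg u]
    have : ‖u‖ ≤ ‖T‖ * ‖u‖ := hTu ▸ T.le_opNorm u
    have hupos : 0 < ‖u‖ := norm_pos_iff.2 hu0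
    rw [hnorm] at hlt
    nlinarith
  · intro hdet
    rcases Nat.eq_zero_or_pos n with hn | hn
    · subst hn
      have : X = 0 := Subsingleton.elim _ _
      simp [this]
    · haveI : Nonempty (Fin n) := Fin.pos_iff_nonempty.mp hn
      obtain ⟨v0, hv0mem, hmax⟩ :=
        (isCompact_sphere (0 : EuclideanSpace ℂ (Fin n)) 1).exists_isMaxOn
          (NormedSpace.sphere_nonempty.mpr zero_le_one)
          ((continuous_norm.comp T.continuous).continuousOn)
      have hv0norm : ‖v0‖ = 1 := by simpa using mem_sphere_zero_iff_norm.mp hv0mem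
      have hTle : ‖T‖ ≤ ‖T v0‖ := by
        refine T.opNorm_le_bound (norm_nonneg _) fun v => ?_
        rcases eq_or_ne v 0 with rfl | hv
        · simp
        · have hvpos : 0 < ‖v‖ := norm_pos_iff.2 hv
          have hwmem : (‖v‖⁻¹ • v) ∈ Metric.sphere (0 : EuclideanSpace ℂ (Fin n)) 1 := by
            simp [norm_smul, abs_of_pos hvpos, inv_mul_cancel₀ hvpos.ne']
          have := hmax hwmem
          simp only [Function.comp_apply, _root_.map_smul, norm_smul, norm_inv, norm_norm] at this
          calc ‖T v‖ = ‖v‖ * (‖v‖⁻¹ * ‖T v‖) := by field_simp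
          _ ≤ ‖v‖ * ‖T v0‖ := by
              refine mul_le_mul_of_nonneg_left ?_ hvpos.le
              simpa [norm_smul] using this
          _ = ‖T v0‖ * ‖v‖ := mul_comm _ _
      have hSv0 : S v0 ≠ 0 := by
        intro hzero
        have hv0ne : v0 ≠ 0 := by
          intro h0; rw [h0] at hv0norm; simp at hv0norm
        have : Y *ᵥ (WithLp.equiv 2 _ v0) = 0 := by
          have := congrArg (WithLp.equiv 2 _) hzero
          rw [hS] at this
          simpa using this
        have := Matrix.eq_zero_of_mulVec_eq_zero hdet this
        exact hv0ne (by simpa using congrArg (WithLp.equiv 2 _).symm this)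
      have hid := aux_vec13 n X Y h v0
      rw [hv0norm] at hid
      have hSpos : 0 < ‖S v0‖ := norm_pos_iff.2 hSv0
      have hTv0 : ‖T v0‖ < 1 := by nlinarith [norm_nonneg (T v0)]
      rw [hnorm]
      exact lt_of_le_of_lt hTle hTv0

open scoped ComplexOrder in
private lemma det_isUnit13 (n : ℕ) (a c : Matrix (Fin n) (Fin n) ℂ)
    (h : aᴴ * a = 1 + cᴴ * c) : IsUnit a.det := by
  have hapos : (aᴴ * a).PosDef := by
    rw [h]
    exact Matrix.PosDef.add_posSemidef Matrix.PosDef.one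
      (Matrix.posSemidef_conjTranspose_mul_self c)
  have := (Matrix.isUnit_iff_isUnit_det _).mp hapos.isUnit
  rw [Matrix.det_mul, Matrix.det_conjTranspose] at this
  exact isUnit_of_mul_isUnit_right this

/-- The key algebraic identity `Kᴴ K + gᴴ 𝓘 g = Lᴴ L + 𝓘`. -/
private lemma key_identity13 (n : ℕ) (a b c d : Matrix (Fin n) (Fin n) ℂ) :
    (fromBlocks 0 1 a b)ᴴ * (fromBlocks 0 1 a b) +
      (fromBlocks a b c d)ᴴ * (fromBlocks (-1) 0 0 1) * (fromBlocks a b c d)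
    = (fromBlocks 1 0 c d)ᴴ * (fromBlocks 1 0 c d) + (fromBlocks (-1) 0 0 1) := by
  rw [fromBlocks_conjTranspose, fromBlocks_conjTranspose, fromBlocks_conjTranspose,
    fromBlocks_multiply, fromBlocks_multiply, fromBlocks_multiply, fromBlocks_multiply,
    fromBlocks_add, fromBlocks_add]
  refine blocks_congr13 ?_ ?_ ?_ ?_ <;> simp <;> abel

/-- `Π(U(n,n))` consists of the unitary `2n×2n` matrices `[[α,β],[γ,δ]]` with
`det β ≠ 0`; moreover, for a unitary block matrix the conditions `det β ≠ 0`,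
`det γ ≠ 0`, `‖α‖ < 1` and `‖δ‖ < 1` are all equivalent. -/
theorem stmt13 (n : ℕ) (I' : Matrix (Fin n ⊕ Fin n) (Fin n ⊕ Fin n) ℂ)
    (hI : I' = Matrix.fromBlocks (-1) 0 0 1) :
    ({r : Matrix (Fin n ⊕ Fin n) (Fin n ⊕ Fin n) ℂ |
        ∃ a b c d : Matrix (Fin n) (Fin n) ℂ,
          (Matrix.fromBlocks a b c d)ᴴ * I' * Matrix.fromBlocks a b c d = I' ∧
          r = Matrix.fromBlocks (-(a⁻¹ * b)) a⁻¹ (d - c * a⁻¹ * b) (c * a⁻¹)} =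
      {r : Matrix (Fin n ⊕ Fin n) (Fin n ⊕ Fin n) ℂ |
        ∃ α β γ δ : Matrix (Fin n) (Fin n) ℂ,
          r = Matrix.fromBlocks α β γ δ ∧ rᴴ * r = 1 ∧ β.det ≠ 0}) ∧
    (∀ α β γ δ : Matrix (Fin n) (Fin n) ℂ,
      (Matrix.fromBlocks α β γ δ)ᴴ * Matrix.fromBlocks α β γ δ = 1 →
        ((β.det ≠ 0 ↔ γ.det ≠ 0) ∧ (β.det ≠ 0 ↔ ‖α‖ < 1) ∧
          (β.det ≠ 0 ↔ ‖δ‖ < 1))) := by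
  subst hI
  constructor
  · ext r
    simp only [Set.mem_setOf_eq]
    constructor
    · rintro ⟨a, b, c, d, hg, hr⟩
      set K : Matrix (Fin n ⊕ Fin n) (Fin n ⊕ Fin n) ℂ := fromBlocks 0 1 a b with hK
      set L : Matrix (Fin n ⊕ Fin n) (Fin n ⊕ Fin n) ℂ := fromBlocks 1 0 c d with hL
      have hKL : Kᴴ * K = Lᴴ * L := by
        have := key_identity13 n a b c d
        rw [hg] at this
        exact add_right_cancel this
      -- a is invertible
      have h11 : aᴴ * a = 1 + cᴴ * c := by
        rw [hK, hL, fromBlocks_conjTranspose, fromBlocks_conjTranspose,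
          fromBlocks_multiply, fromBlocks_multiply] at hKL
        have := (blocks_eq13 hKL).1
        simpa using this
      have ha : IsUnit a.det := det_isUnit13 n a c h11
      have haA : a * a⁻¹ = 1 := Matrix.mul_nonsing_inv a ha
      set M : Matrix (Fin n ⊕ Fin n) (Fin n ⊕ Fin n) ℂ := fromBlocks (-(a⁻¹ * b)) a⁻¹ 1 0
        with hM
      have hKM : K * M = 1 := by
        rw [hK, hM, fromBlocks_multiply, ← fromBlocks_one]
        refine blocks_congr13 ?_ ?_ ?_ ?_
        · simp
        · simp
        · simp [Matrix.mul_neg, ← Matrix.mul_assoc, haA]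
        · simp [haA]
      have hLM : L * M = fromBlocks (-(a⁻¹ * b)) a⁻¹ (d - c * a⁻¹ * b) (c * a⁻¹) := by
        rw [hL, hM, fromBlocks_multiply]
        refine blocks_congr13 ?_ ?_ ?_ ?_
        · simp
        · simp
        · simp [Matrix.mul_neg, ← Matrix.mul_assoc]; abel
        · simp
      refine ⟨-(a⁻¹ * b), a⁻¹, d - c * a⁻¹ * b, c * a⁻¹, hr, ?_, ?_⟩
      · rw [hr, ← hLM]
        calc (L * M)ᴴ * (L * M) = Mᴴ * (Lᴴ * L) * M := by
              rw [conjTranspose_mul]; noncomm_ring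
        _ = Mᴴ * (Kᴴ * K) * M := by rw [hKL]
        _ = (K * M)ᴴ * (K * M) := by rw [conjTranspose_mul]; noncomm_ring
        _ = 1 := by rw [hKM]; simp
      · have h1 : a⁻¹ * a = 1 := Matrix.nonsing_inv_mul a ha
        have := congrArg Matrix.det h1
        rw [Matrix.det_mul, Matrix.det_one] at this
        exact left_ne_zero_of_mul_eq_one this
    · rintro ⟨α, β, γ, δ, hr, hu, hβ⟩
      have hβu : IsUnit β.det := isUnit_iff_ne_zero.mpr hβ
      have hββ : β * β⁻¹ = 1 := Matrix.mul_nonsing_inv β hβu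
      have hinvb : β⁻¹ * β = 1 := Matrix.nonsing_inv_mul β hβu
      set a := β⁻¹ with hadef
      set b := -(β⁻¹ * α) with hbdef
      set c := δ * β⁻¹ with hcdef
      set d := γ + δ * b with hddef
      set K : Matrix (Fin n ⊕ Fin n) (Fin n ⊕ Fin n) ℂ := fromBlocks 0 1 a b with hK
      set L : Matrix (Fin n ⊕ Fin n) (Fin n ⊕ Fin n) ℂ := fromBlocks 1 0 c d with hL
      have hrK : r * K = L := by
        rw [hr, hK, hL, fromBlocks_multiply]
        refine blocks_congr13 ?_ ?_ ?_ ?_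
        · simp [hadef, hββ, Matrix.mul_nonsing_inv β hβu]
        · simp [hbdef, Matrix.mul_neg, ← Matrix.mul_assoc, hββ, Matrix.mul_nonsing_inv β hβu]
        · simp [hadef, hcdef]
        · simp [hddef]
      have hKK : Lᴴ * L = Kᴴ * K := by
        rw [← hrK]
        calc (r * K)ᴴ * (r * K) = Kᴴ * (rᴴ * r) * K := by
              rw [conjTranspose_mul]; noncomm_ring
        _ = Kᴴ * K := by rw [hu]; simp [Matrix.mul_assoc]
      have hβinv : (β⁻¹)⁻¹ = β := Matrix.nonsing_inv_nonsing_inv β hβu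
      refine ⟨a, b, c, d, ?_, ?_⟩
      · have := key_identity13 n a b c d
        rw [← hK, ← hL, hKK] at this
        exact add_left_cancel this
      · have e2 : a⁻¹ = β := by rw [hadef, hβinv]
        have e1 : -(a⁻¹ * b) = α := by
          rw [e2, hbdef, Matrix.mul_neg, neg_neg, ← Matrix.mul_assoc, hββ, Matrix.one_mul]
        have e4 : c * a⁻¹ = δ := by
          rw [e2, hcdef, Matrix.mul_assoc, hinvb, Matrix.mul_one]
        have e3 : d - c * a⁻¹ * b = γ := by
          rw [e4, hddef]; abel
        rw [e1, e3, e4, e2]; exact hr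
  · intro α β γ δ h
    have h' : (Matrix.fromBlocks α β γ δ) * (Matrix.fromBlocks α β γ δ)ᴴ = 1 :=
      mul_eq_one_comm.mp h
    rw [fromBlocks_conjTranspose, fromBlocks_multiply, ← fromBlocks_one] at h h'
    obtain ⟨U1, U2, U3, U4⟩ := blocks_eq13 h
    obtain ⟨V1, V2, V3, V4⟩ := blocks_eq13 h'
    have kβ : ‖α‖ < 1 ↔ β.det ≠ 0 := by
      have := aux_key13 n αᴴ βᴴ (by simpa using V1)
      rwa [Matrix.l2_opNorm_conjTranspose, Matrix.det_conjTranspose, star_ne_zero] at this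
    have kγ : ‖α‖ < 1 ↔ γ.det ≠ 0 := aux_key13 n α γ U1
    have kδ : ‖δ‖ < 1 ↔ β.det ≠ 0 := aux_key13 n δ β (by rw [add_comm]; exact U4)
    exact ⟨kβ.symm.trans kγ, kβ.symm, kδ.symm⟩
end

section
/- If [[α,β],[γ,δ]] ∈ Mat(2n,ℂ) written in n×n blocks satisfies ‖[[α,β],[γ,δ]]‖ ≤ 1 and det β ≠ 0, then ‖α‖ < 1 and ‖δ‖ < 1. -/
open Matrix
open scoped Matrix.Norms.L2Operator

private lemma esq {ι : Type*} [Fintype ι] (w : ι → ℂ) :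
    ‖(WithLp.equiv 2 (ι → ℂ)).symm w‖ ^ 2 = ∑ i, ‖w i‖ ^ 2 := by
  rw [EuclideanSpace.norm_eq, Real.sq_sqrt (by positivity)]
  simp

private lemma norm_elim_sq {n : ℕ} (u v : Fin n → ℂ) :
    ‖(WithLp.equiv 2 ((Fin n ⊕ Fin n) → ℂ)).symm (Sum.elim u v)‖ ^ 2
      = ‖(WithLp.equiv 2 ((Fin n) → ℂ)).symm u‖ ^ 2
        + ‖(WithLp.equiv 2 ((Fin n) → ℂ)).symm v‖ ^ 2 := by
  rw [esq, esq, esq, Fintype.sum_sum_type]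
  simp

/-- main inequality: if `‖fromBlocks a b c d‖ ≤ 1` then
`‖a x‖² + ‖c x‖² ≤ ‖x‖²`. -/
private lemma main_ineq {n : ℕ} (a b c d : Matrix (Fin n) (Fin n) ℂ)
    (h : ‖Matrix.fromBlocks a b c d‖ ≤ 1) (x : Fin n → ℂ) :
    ‖(WithLp.equiv 2 ((Fin n) → ℂ)).symm (a *ᵥ x)‖ ^ 2
      + ‖(WithLp.equiv 2 ((Fin n) → ℂ)).symm (c *ᵥ x)‖ ^ 2
      ≤ ‖(WithLp.equiv 2 ((Fin n) → ℂ)).symm x‖ ^ 2 := by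
  have h1 := Matrix.l2_opNorm_mulVec (Matrix.fromBlocks a b c d)
      ((WithLp.equiv 2 ((Fin n ⊕ Fin n) → ℂ)).symm (Sum.elim x 0))
  have hv : (Matrix.fromBlocks a b c d) *ᵥ
      ((WithLp.equiv 2 ((Fin n ⊕ Fin n) → ℂ)).symm (Sum.elim x 0) :
        EuclideanSpace ℂ (Fin n ⊕ Fin n))
      = Sum.elim (a *ᵥ x) (c *ᵥ x) := by
    show (Matrix.fromBlocks a b c d) *ᵥ (Sum.elim x 0) = _
    rw [Matrix.fromBlocks_mulVec]
    simp
  rw [hv] at h1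
  have h2 : ‖((EuclideanSpace.equiv (Fin n ⊕ Fin n) ℂ).symm
      (Sum.elim (a *ᵥ x) (c *ᵥ x)) : EuclideanSpace ℂ (Fin n ⊕ Fin n))‖
      = ‖(WithLp.equiv 2 ((Fin n ⊕ Fin n) → ℂ)).symm (Sum.elim (a *ᵥ x) (c *ᵥ x))‖ := rfl
  have h3 : ‖((WithLp.equiv 2 ((Fin n ⊕ Fin n) → ℂ)).symm (Sum.elim x 0) :
      EuclideanSpace ℂ (Fin n ⊕ Fin n))‖ ^ 2
      = ‖(WithLp.equiv 2 ((Fin n) → ℂ)).symm x‖ ^ 2 := by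
    rw [norm_elim_sq]; simp
  rw [← norm_elim_sq, ← h3]
  have hnn : (0:ℝ) ≤ ‖((WithLp.equiv 2 ((Fin n ⊕ Fin n) → ℂ)).symm (Sum.elim x 0) :
      EuclideanSpace ℂ (Fin n ⊕ Fin n))‖ := norm_nonneg _
  rw [h2] at h1
  have h1' := h1.trans (mul_le_of_le_one_left hnn h)
  exact pow_le_pow_left₀ (norm_nonneg _) h1' 2

private lemma main_ineq' {n : ℕ} (a b c d : Matrix (Fin n) (Fin n) ℂ)
    (h : ‖Matrix.fromBlocks a b c d‖ ≤ 1) (x : Fin n → ℂ) :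
    ‖(WithLp.equiv 2 ((Fin n) → ℂ)).symm (b *ᵥ x)‖ ^ 2
      + ‖(WithLp.equiv 2 ((Fin n) → ℂ)).symm (d *ᵥ x)‖ ^ 2
      ≤ ‖(WithLp.equiv 2 ((Fin n) → ℂ)).symm x‖ ^ 2 := by
  have h1 := Matrix.l2_opNorm_mulVec (Matrix.fromBlocks a b c d)
      ((WithLp.equiv 2 ((Fin n ⊕ Fin n) → ℂ)).symm (Sum.elim 0 x))
  have hv : (Matrix.fromBlocks a b c d) *ᵥ
      ((WithLp.equiv 2 ((Fin n ⊕ Fin n) → ℂ)).symm (Sum.elim 0 x) :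
        EuclideanSpace ℂ (Fin n ⊕ Fin n))
      = Sum.elim (b *ᵥ x) (d *ᵥ x) := by
    show (Matrix.fromBlocks a b c d) *ᵥ (Sum.elim 0 x) = _
    rw [Matrix.fromBlocks_mulVec]
    simp
  rw [hv] at h1
  have h2 : ‖((EuclideanSpace.equiv (Fin n ⊕ Fin n) ℂ).symm
      (Sum.elim (b *ᵥ x) (d *ᵥ x)) : EuclideanSpace ℂ (Fin n ⊕ Fin n))‖
      = ‖(WithLp.equiv 2 ((Fin n ⊕ Fin n) → ℂ)).symm (Sum.elim (b *ᵥ x) (d *ᵥ x))‖ := rfl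
  have h3 : ‖((WithLp.equiv 2 ((Fin n ⊕ Fin n) → ℂ)).symm (Sum.elim 0 x) :
      EuclideanSpace ℂ (Fin n ⊕ Fin n))‖ ^ 2
      = ‖(WithLp.equiv 2 ((Fin n) → ℂ)).symm x‖ ^ 2 := by
    rw [norm_elim_sq]; simp
  rw [← norm_elim_sq, ← h3]
  have hnn : (0:ℝ) ≤ ‖((WithLp.equiv 2 ((Fin n ⊕ Fin n) → ℂ)).symm (Sum.elim 0 x) :
      EuclideanSpace ℂ (Fin n ⊕ Fin n))‖ := norm_nonneg _
  rw [h2] at h1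
  have h1' := h1.trans (mul_le_of_le_one_left hnn h)
  exact pow_le_pow_left₀ (norm_nonneg _) h1' 2

/-- key lemma: lower-left block invertible forces upper-left block norm < 1. -/
private lemma key {n : ℕ} (hn : 0 < n) (a b c d : Matrix (Fin n) (Fin n) ℂ)
    (h : ‖Matrix.fromBlocks a b c d‖ ≤ 1) (hc : c⁻¹ * c = 1) : ‖a‖ < 1 := by
  set e := (WithLp.equiv 2 ((Fin n) → ℂ)).symm with he
  set k := ‖c⁻¹‖ with hkdef
  have hcinv_ne : c⁻¹ ≠ 0 := by
    intro h0
    rw [h0, zero_mul] at hc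
    exact one_ne_zero (congrFun (congrFun hc.symm ⟨0, hn⟩) ⟨0, hn⟩)
  have hk : 0 < k := norm_pos_iff.mpr hcinv_ne
  have hX_le : ∀ x : Fin n → ℂ, ‖e x‖ ≤ k * ‖e (c *ᵥ x)‖ := by
    intro x
    have h1 := Matrix.l2_opNorm_mulVec c⁻¹ (e (c *ᵥ x))
    have h2 : c⁻¹ *ᵥ ((e (c *ᵥ x)) : EuclideanSpace ℂ (Fin n)) = x := by
      show c⁻¹ *ᵥ (c *ᵥ x) = x
      rw [Matrix.mulVec_mulVec, hc, Matrix.one_mulVec]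
    rw [h2] at h1
    exact h1
  have hk1 : (1:ℝ) ≤ k := by
    set y : Fin n → ℂ := Pi.single ⟨0, hn⟩ 1 with hy
    have hy1 : ‖e y‖ = 1 := by
      have : (e y : EuclideanSpace ℂ (Fin n)) = EuclideanSpace.single ⟨0, hn⟩ (1:ℂ) := rfl
      rw [this, EuclideanSpace.norm_single, norm_one]
    have h1 := main_ineq a b c d h y
    have h2 := hX_le y
    rw [hy1] at h1 h2
    nlinarith [norm_nonneg (e (a *ᵥ y)), norm_nonneg (e (c *ᵥ y))]
  have hinv2 : (0:ℝ) < k⁻¹ ^ 2 := by positivity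
  have htnn : (0:ℝ) ≤ 1 - k⁻¹ ^ 2 := by
    have : k⁻¹ ≤ 1 := by
      rw [inv_le_one_iff₀]; right; exact hk1
    nlinarith [inv_nonneg.mpr hk.le]
  have hbound : ‖a‖ ≤ Real.sqrt (1 - k⁻¹ ^ 2) := by
    rw [Matrix.l2_opNorm_def]
    apply ContinuousLinearMap.opNorm_le_bound _ (Real.sqrt_nonneg _)
    intro x
    set u : Fin n → ℂ := WithLp.equiv 2 ((Fin n) → ℂ) x with hu
    have happ : (((Matrix.toEuclideanLin.trans LinearMap.toContinuousLinearMap) a) x :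
        EuclideanSpace ℂ (Fin n)) = e (a *ᵥ u) := rfl
    have hxu : ‖x‖ = ‖e u‖ := rfl
    rw [happ, hxu]
    have h1 := main_ineq a b c d h u
    have h2 := hX_le u
    have hA2 : ‖e (a *ᵥ u)‖ ^ 2 ≤ (1 - k⁻¹ ^ 2) * ‖e u‖ ^ 2 := by
      have hX2 : ‖e u‖ ^ 2 ≤ k ^ 2 * ‖e (c *ᵥ u)‖ ^ 2 := by
        nlinarith [norm_nonneg (e u), norm_nonneg (e (c *ᵥ u))]
      have : k⁻¹ ^ 2 * ‖e u‖ ^ 2 ≤ ‖e (c *ᵥ u)‖ ^ 2 := by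
        have hk2 : (0:ℝ) < k ^ 2 := by positivity
        rw [← mul_le_mul_iff_right₀ hk2, ← mul_assoc]
        calc k ^ 2 * k⁻¹ ^ 2 * ‖e u‖ ^ 2 = ‖e u‖ ^ 2 := by
              field_simp
          _ ≤ k ^ 2 * ‖e (c *ᵥ u)‖ ^ 2 := hX2
      nlinarith
    calc ‖e (a *ᵥ u)‖ = Real.sqrt (‖e (a *ᵥ u)‖ ^ 2) := by
          rw [Real.sqrt_sq (norm_nonneg _)]
      _ ≤ Real.sqrt ((1 - k⁻¹ ^ 2) * ‖e u‖ ^ 2) := Real.sqrt_le_sqrt hA2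
      _ = Real.sqrt (1 - k⁻¹ ^ 2) * ‖e u‖ := by
          rw [Real.sqrt_mul htnn, Real.sqrt_sq (norm_nonneg _)]
  refine lt_of_le_of_lt hbound ?_
  exact (Real.sqrt_lt' one_pos).mpr (by nlinarith)

/-- variant: upper-right block invertible forces lower-right block norm < 1. -/
private lemma key' {n : ℕ} (hn : 0 < n) (a b c d : Matrix (Fin n) (Fin n) ℂ)
    (h : ‖Matrix.fromBlocks a b c d‖ ≤ 1) (hb : b⁻¹ * b = 1) : ‖d‖ < 1 := by
  set e := (WithLp.equiv 2 ((Fin n) → ℂ)).symm with he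
  set k := ‖b⁻¹‖ with hkdef
  have hbinv_ne : b⁻¹ ≠ 0 := by
    intro h0
    rw [h0, zero_mul] at hb
    exact one_ne_zero (congrFun (congrFun hb.symm ⟨0, hn⟩) ⟨0, hn⟩)
  have hk : 0 < k := norm_pos_iff.mpr hbinv_ne
  have hX_le : ∀ x : Fin n → ℂ, ‖e x‖ ≤ k * ‖e (b *ᵥ x)‖ := by
    intro x
    have h1 := Matrix.l2_opNorm_mulVec b⁻¹ (e (b *ᵥ x))
    have h2 : b⁻¹ *ᵥ ((e (b *ᵥ x)) : EuclideanSpace ℂ (Fin n)) = x := by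
      show b⁻¹ *ᵥ (b *ᵥ x) = x
      rw [Matrix.mulVec_mulVec, hb, Matrix.one_mulVec]
    rw [h2] at h1
    exact h1
  have hk1 : (1:ℝ) ≤ k := by
    set y : Fin n → ℂ := Pi.single ⟨0, hn⟩ 1 with hy
    have hy1 : ‖e y‖ = 1 := by
      have : (e y : EuclideanSpace ℂ (Fin n)) = EuclideanSpace.single ⟨0, hn⟩ (1:ℂ) := rfl
      rw [this, EuclideanSpace.norm_single, norm_one]
    have h1 := main_ineq' a b c d h y
    have h2 := hX_le y
    rw [hy1] at h1 h2
    nlinarith [norm_nonneg (e (b *ᵥ y)), norm_nonneg (e (d *ᵥ y))]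
  have hinv2 : (0:ℝ) < k⁻¹ ^ 2 := by positivity
  have htnn : (0:ℝ) ≤ 1 - k⁻¹ ^ 2 := by
    have : k⁻¹ ≤ 1 := by
      rw [inv_le_one_iff₀]; right; exact hk1
    nlinarith [inv_nonneg.mpr hk.le]
  have hbound : ‖d‖ ≤ Real.sqrt (1 - k⁻¹ ^ 2) := by
    rw [Matrix.l2_opNorm_def]
    apply ContinuousLinearMap.opNorm_le_bound _ (Real.sqrt_nonneg _)
    intro x
    set u : Fin n → ℂ := WithLp.equiv 2 ((Fin n) → ℂ) x with hu
    have happ : (((Matrix.toEuclideanLin.trans LinearMap.toContinuousLinearMap) d) x :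
        EuclideanSpace ℂ (Fin n)) = e (d *ᵥ u) := rfl
    have hxu : ‖x‖ = ‖e u‖ := rfl
    rw [happ, hxu]
    have h1 := main_ineq' a b c d h u
    have h2 := hX_le u
    have hA2 : ‖e (d *ᵥ u)‖ ^ 2 ≤ (1 - k⁻¹ ^ 2) * ‖e u‖ ^ 2 := by
      have hX2 : ‖e u‖ ^ 2 ≤ k ^ 2 * ‖e (b *ᵥ u)‖ ^ 2 := by
        nlinarith [norm_nonneg (e u), norm_nonneg (e (b *ᵥ u))]
      have : k⁻¹ ^ 2 * ‖e u‖ ^ 2 ≤ ‖e (b *ᵥ u)‖ ^ 2 := by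
        have hk2 : (0:ℝ) < k ^ 2 := by positivity
        rw [← mul_le_mul_iff_right₀ hk2, ← mul_assoc]
        calc k ^ 2 * k⁻¹ ^ 2 * ‖e u‖ ^ 2 = ‖e u‖ ^ 2 := by
              field_simp
          _ ≤ k ^ 2 * ‖e (b *ᵥ u)‖ ^ 2 := hX2
      nlinarith
    calc ‖e (d *ᵥ u)‖ = Real.sqrt (‖e (d *ᵥ u)‖ ^ 2) := by
          rw [Real.sqrt_sq (norm_nonneg _)]
      _ ≤ Real.sqrt ((1 - k⁻¹ ^ 2) * ‖e u‖ ^ 2) := Real.sqrt_le_sqrt hA2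
      _ = Real.sqrt (1 - k⁻¹ ^ 2) * ‖e u‖ := by
          rw [Real.sqrt_mul htnn, Real.sqrt_sq (norm_nonneg _)]
  refine lt_of_le_of_lt hbound ?_
  exact (Real.sqrt_lt' one_pos).mpr (by nlinarith)

/-- If `‖[[α,β],[γ,δ]]‖ ≤ 1` (operator norm) and `det β ≠ 0`, then `‖α‖ < 1`
and `‖δ‖ < 1`. -/
theorem stmt14 (n : ℕ) (α β γ δ : Matrix (Fin n) (Fin n) ℂ)
    (hnorm : ‖Matrix.fromBlocks α β γ δ‖ ≤ 1) (hβ : β.det ≠ 0) :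
    ‖α‖ < 1 ∧ ‖δ‖ < 1 := by
  rcases Nat.eq_zero_or_pos n with hn | hn
  · subst hn
    have hα : α = 0 := Subsingleton.elim _ _
    have hδ : δ = 0 := Subsingleton.elim _ _
    rw [hα, hδ, norm_zero]
    exact ⟨one_pos, one_pos⟩
  · have hβu : IsUnit β.det := isUnit_iff_ne_zero.mpr hβ
    have hβinv : β⁻¹ * β = 1 := Matrix.nonsing_inv_mul β hβu
    constructor
    · have hconj : ‖Matrix.fromBlocks αᴴ γᴴ βᴴ δᴴ‖ ≤ 1 := by
        rw [← Matrix.fromBlocks_conjTranspose, Matrix.l2_opNorm_conjTranspose]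
        exact hnorm
      have hβH : (βᴴ)⁻¹ * βᴴ = 1 := by
        apply Matrix.nonsing_inv_mul
        rw [Matrix.det_conjTranspose]
        exact hβu.star
      have := key hn αᴴ γᴴ βᴴ δᴴ hconj hβH
      rwa [Matrix.l2_opNorm_conjTranspose] at this
    · exact key' hn α β γ δ hnorm hβinv
end
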